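/- Let μ > 0, γ > 0 with γ ≥ √μ/2, and let x ∈ ℝ. Then the proximal cost function g(u) = (x − u)²/(2μ) − log(γ/(γ² + u²)) attains a global minimum on ℝ at a unique point; i.e., there exists a unique u* ∈ ℝ such that g(u*) ≤ g(u) for all u ∈ ℝ. (In particular the proximal operator of the Cauchy penalty is well defined.) -/

import Mathlib

open Filter

/-- For μ > 0, γ > 0 with γ ≥ √μ/2 and x ∈ ℝ, the proximal cost function
g(u) = (x − u)²/(2μ) − log(γ/(γ² + u²)) attains a global minimum at a unique
point of ℝ. -/
theorem cauchy_prox_cost_existsUnique_min (μ γ x : ℝ) (hμ : 0 < μ) (hγ : 0 < γ)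
    (hcond : Real.sqrt μ / 2 ≤ γ) :
    ∃! uStar : ℝ, ∀ u : ℝ,
      (x - uStar) ^ 2 / (2 * μ) - Real.log (γ / (γ ^ 2 + uStar ^ 2)) ≤
        (x - u) ^ 2 / (2 * μ) - Real.log (γ / (γ ^ 2 + u ^ 2)) := by
  have h4 : μ ≤ 4 * γ ^ 2 := by
    have h1 := Real.sq_sqrt hμ.le
    nlinarith [Real.sqrt_nonneg μ]
  set f : ℝ → ℝ := fun u => (x - u) ^ 2 / (2 * μ) - Real.log (γ / (γ ^ 2 + u ^ 2)) with hfdef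
  have hD : ∀ u : ℝ, (0:ℝ) < γ ^ 2 + u ^ 2 := fun u => by positivity
  have hfg : ∀ u, f u = (x - u) ^ 2 / (2 * μ) + (Real.log (γ ^ 2 + u ^ 2) - Real.log γ) := by
    intro u
    simp only [hfdef]
    rw [Real.log_div hγ.ne' (hD u).ne']
    ring
  -- continuity
  have hcont : Continuous f := by
    rw [funext hfg]
    fun_prop (disch := intros; positivity)
  -- derivative
  have hderiv : ∀ u : ℝ, HasDerivAt f ((u - x) / μ + 2 * u / (γ ^ 2 + u ^ 2)) u := by
    intro u
    rw [funext hfg]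
    have h1 : HasDerivAt (fun u : ℝ => (x - u) ^ 2 / (2 * μ)) ((u - x) / μ) u := by
      have := (((hasDerivAt_id u).const_sub x).pow 2).div_const (2 * μ)
      refine this.congr_deriv ?_
      simp only [id]
      field_simp
      ring
    have h2 : HasDerivAt (fun u : ℝ => Real.log (γ ^ 2 + u ^ 2) - Real.log γ)
        (2 * u / (γ ^ 2 + u ^ 2)) u := by
      have := (((hasDerivAt_pow 2 u).const_add (γ ^ 2)).log (hD u).ne').sub_const (Real.log γ)
      refine this.congr_deriv ?_
      push_cast
      ring
    exact h1.add h2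
  -- strict monotonicity of the derivative
  have hmono : ∀ a b : ℝ, a < b →
      (a - x) / μ + 2 * a / (γ ^ 2 + a ^ 2) < (b - x) / μ + 2 * b / (γ ^ 2 + b ^ 2) := by
    intro a b hab
    have hDa := hD a
    have hDb := hD b
    have habne : a - b ≠ 0 := sub_ne_zero.2 hab.ne
    have hpos3 : 0 < (a * b - 3 * γ ^ 2) ^ 2 + γ ^ 2 * (a - b) ^ 2 := by positivity
    have hbr : 0 < (γ ^ 2 + a ^ 2) * (γ ^ 2 + b ^ 2) + 2 * μ * (γ ^ 2 - a * b) := by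
      nlinarith [mul_nonneg (sub_nonneg.2 h4) (mul_pos hDa hDb).le, mul_pos hμ hpos3,
        mul_pos (by positivity : (0:ℝ) < 4 * γ ^ 2) (mul_pos hDa hDb)]
    rw [← sub_pos]
    have key : ((b - x) / μ + 2 * b / (γ ^ 2 + b ^ 2)) - ((a - x) / μ + 2 * a / (γ ^ 2 + a ^ 2))
        = (b - a) * ((γ ^ 2 + a ^ 2) * (γ ^ 2 + b ^ 2) + 2 * μ * (γ ^ 2 - a * b))
          / (μ * ((γ ^ 2 + a ^ 2) * (γ ^ 2 + b ^ 2))) := by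
      field_simp
      ring
    rw [key]
    exact div_pos (mul_pos (sub_pos.2 hab) hbr) (by positivity)
  -- coercivity
  have hcoer : Tendsto f (cocompact ℝ) atTop := by
    have h1 : Tendsto (fun u : ℝ => 2 * Real.log |u| - Real.log γ) (cocompact ℝ) atTop := by
      have habs : Tendsto (fun u : ℝ => |u|) (cocompact ℝ) atTop := by
        exact (tendsto_norm_cocompact_atTop (E := ℝ)).congr (fun u => Real.norm_eq_abs u)
      have hlog : Tendsto (fun u : ℝ => Real.log |u|) (cocompact ℝ) atTop :=
        Real.tendsto_log_atTop.comp habs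
      exact (tendsto_atTop_add_const_right _ (-Real.log γ)
        (hlog.const_mul_atTop two_pos)).congr (fun u => by ring)
    refine tendsto_atTop_mono' _ ?_ h1
    have hev : ∀ᶠ u : ℝ in cocompact ℝ, 1 ≤ |u| := by
      have habs : Tendsto (fun u : ℝ => |u|) (cocompact ℝ) atTop := by
        exact (tendsto_norm_cocompact_atTop (E := ℝ)).congr (fun u => Real.norm_eq_abs u)
      exact habs.eventually_ge_atTop 1
    filter_upwards [hev] with u hu
    rw [hfg u]
    have hu2 : (0:ℝ) < u ^ 2 := by nlinarith [abs_nonneg u, sq_abs u]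
    have h2 : Real.log (u ^ 2) ≤ Real.log (γ ^ 2 + u ^ 2) :=
      Real.log_le_log hu2 (by nlinarith)
    have h3 : Real.log (u ^ 2) = 2 * Real.log |u| := by
      rw [← sq_abs u, Real.log_pow]
      norm_num
    have h5 : 0 ≤ (x - u) ^ 2 / (2 * μ) := by positivity
    linarith
  -- existence
  obtain ⟨uStar, hmin⟩ := hcont.exists_forall_le hcoer
  refine ⟨uStar, hmin, ?_⟩
  intro y hy
  by_contra hne
  have hcrit : ∀ z : ℝ, (∀ u, f z ≤ f u) → (z - x) / μ + 2 * z / (γ ^ 2 + z ^ 2) = 0 := by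
    intro z hz
    exact ((isMinOn_univ_iff.mpr hz).isLocalMin Filter.univ_mem).hasDerivAt_eq_zero (hderiv z)
  have hy0 := hcrit y hy
  have hu0 := hcrit uStar hmin
  rcases lt_or_gt_of_ne hne with h | h
  · have := hmono y uStar h; linarith
  · have := hmono uStar y h; linarith
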